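/- If a chain code U satisfies qturn(P) ∈ {-1, 0, 1} for every prefix P, then every point of its unfolding dual path with the same y-coordinate as the final point lies within horizontal distance equal to the length of the final horizontal run; in particular, for each integer y, the set of path points at height y forms a set of consecutive lattice points on a horizontal line. -/

import Mathlib

inductive TurnSym : Type
  | L | R | S
deriving DecidableEq

def qt : TurnSym → ℤ
  | TurnSym.L => -1
  | TurnSym.R => 1
  | TurnSym.S => 0

def qturn (U : List TurnSym) : ℤ := (U.map qt).sum

def rot : TurnSym → ℤ × ℤ → ℤ × ℤ
  | TurnSym.R, d => (d.2, -d.1)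
  | TurnSym.L, d => (-d.2, d.1)
  | TurnSym.S, d => d

def pathStep (s : (ℤ × ℤ) × (ℤ × ℤ)) (a : TurnSym) : (ℤ × ℤ) × (ℤ × ℤ) :=
  let d := rot a s.2
  (s.1 + d, d)

/-- Points p_0 = (0,0), p_1 = (0,1), ..., p_{n+1} of the unfolding dual path. -/
def pts (U : List TurnSym) : List (ℤ × ℤ) :=
  (0, 0) :: (List.scanl pathStep ((0, 1), (0, 1)) U).map Prod.fst

/-- 90° clockwise rotation. -/
def cw (d : ℤ × ℤ) : ℤ × ℤ := (d.2, -d.1)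

/-- Final heading after processing a chain code from initial heading (0,1). -/
def headAfter (U : List TurnSym) : ℤ × ℤ := U.foldl (fun d a => rot a d) (0, 1)

/-- Reflection of a chain code: swap L and R. -/
def reflCode (U : List TurnSym) : List TurnSym :=
  U.map fun a => match a with
    | TurnSym.L => TurnSym.R
    | TurnSym.R => TurnSym.L
    | TurnSym.S => TurnSym.S

/-- Action of a chain code on an arbitrary initial heading. -/
def act (U : List TurnSym) (d : ℤ × ℤ) : ℤ × ℤ := U.foldl (fun d a => rot a d) d

/- ------------------ auxiliary development ------------------ -/

/-- Heading corresponding to a qturn value in {-1,0,1}. -/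
def dir (q : ℤ) : ℤ × ℤ := if q = 1 then (1, 0) else if q = -1 then (-1, 0) else (0, 1)

def ptsF (s : (ℤ × ℤ) × (ℤ × ℤ)) (U : List TurnSym) : List (ℤ × ℤ) :=
  (List.scanl pathStep s U).map Prod.fst

lemma ptsF_nil (s : (ℤ × ℤ) × (ℤ × ℤ)) : ptsF s [] = [s.1] := rfl

lemma ptsF_cons (s : (ℤ × ℤ) × (ℤ × ℤ)) (a : TurnSym) (U : List TurnSym) :
    ptsF s (a :: U) = s.1 :: ptsF (pathStep s a) U := by
  simp [ptsF, List.scanl_cons]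

lemma qt_mem (a : TurnSym) : qt a = -1 ∨ qt a = 0 ∨ qt a = 1 := by
  cases a <;> simp [qt]

lemma rot_dir (a : TurnSym) (q : ℤ) (hq : q = -1 ∨ q = 0 ∨ q = 1)
    (hq' : q + qt a = -1 ∨ q + qt a = 0 ∨ q + qt a = 1) :
    rot a (dir q) = dir (q + qt a) := by
  cases a <;> rcases hq with rfl | rfl | rfl <;> simp_all [rot, dir, qt]

lemma cons_other {p : ℤ × ℤ} {l : List (ℤ × ℤ)} {y c d : ℤ} (hy : y ≠ p.2)
    (hcd : {x : ℤ | (x, y) ∈ l} = Set.Icc c d) :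
    {x : ℤ | (x, y) ∈ p :: l} = Set.Icc c d := by
  ext x
  have hx := Set.ext_iff.mp hcd x
  simp only [Set.mem_setOf_eq, Set.mem_Icc] at hx
  simp only [Set.mem_setOf_eq, List.mem_cons, Set.mem_Icc, Prod.ext_iff]
  rw [← hx]
  constructor
  · rintro (⟨-, h2⟩ | h2)
    · exact absurd h2 hy
    · exact h2
  · exact Or.inr

lemma cons_same {p : ℤ × ℤ} {l : List (ℤ × ℤ)} {Q : ℤ → Prop} {c d : ℤ}
    (hl : ∀ x : ℤ, (x, p.2) ∈ l ↔ Q x)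
    (hiff : ∀ x : ℤ, (x = p.1 ∨ Q x) ↔ (c ≤ x ∧ x ≤ d)) :
    {x : ℤ | (x, p.2) ∈ p :: l} = Set.Icc c d := by
  ext x
  simp only [Set.mem_setOf_eq, List.mem_cons, Set.mem_Icc, Prod.ext_iff, hl x,
    eq_self_iff_true, and_true]
  exact hiff x

/-- Strengthened invariant for the induction. -/
def Good (q : ℤ) (p : ℤ × ℤ) (l : List (ℤ × ℤ)) : Prop :=
  (∀ z ∈ l, p.2 ≤ z.2) ∧
  (∀ y : ℤ, ∃ a b : ℤ, {x : ℤ | (x, y) ∈ l} = Set.Icc a b) ∧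
  ∃ a b : ℤ, a ≤ p.1 ∧ p.1 ≤ b ∧ {x : ℤ | (x, p.2) ∈ l} = Set.Icc a b ∧
    (q = 1 → a = p.1) ∧ (q = -1 → b = p.1)

lemma main : ∀ (U : List TurnSym) (q : ℤ) (p : ℤ × ℤ),
    (q = -1 ∨ q = 0 ∨ q = 1) →
    (∀ P, P <+: U → q + qturn P = -1 ∨ q + qturn P = 0 ∨ q + qturn P = 1) →
    Good q p (ptsF (p, dir q) U) := by
  intro U
  induction U with
  | nil =>
    intro q p hq _
    refine ⟨?_, ?_, p.1, p.1, le_refl _, le_refl _, ?_, fun _ => rfl, fun _ => rfl⟩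
    · intro z hz
      simp [ptsF_nil] at hz
      simp [hz]
    · intro y
      by_cases hy : y = p.2
      · subst hy
        refine ⟨p.1, p.1, ?_⟩
        ext x
        simp [ptsF_nil, Prod.ext_iff]
      · refine ⟨1, 0, ?_⟩
        ext x
        simp [ptsF_nil, Prod.ext_iff, hy]
    · ext x
      simp [ptsF_nil, Prod.ext_iff]
  | cons a U ih =>
    intro q p hq h
    have hq' : q + qt a = -1 ∨ q + qt a = 0 ∨ q + qt a = 1 := by
      have := h [a] ⟨U, rfl⟩
      simpa [qturn] using this
    have htail : ∀ P, P <+: U →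
        (q + qt a) + qturn P = -1 ∨ (q + qt a) + qturn P = 0 ∨ (q + qt a) + qturn P = 1 := by
      intro P hP
      obtain ⟨t, rfl⟩ := hP
      have := h (a :: P) ⟨t, rfl⟩
      simp [qturn] at this ⊢
      omega
    have hstep : pathStep (p, dir q) a = (p + dir (q + qt a), dir (q + qt a)) := by
      simp [pathStep, rot_dir a q hq hq']
    have haq := qt_mem a
    rcases hq' with h1 | h0 | hp1
    · -- q + qt a = -1 : heading left
      have hp' : p + dir (q + qt a) = (p.1 - 1, p.2) := by
        rw [h1]
        have : dir (-1) = ((-1 : ℤ), (0 : ℤ)) := by norm_num [dir]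
        rw [this]
        ext <;> simp <;> ring
      rw [hp'] at hstep
      have key := ih (q + qt a) (p.1 - 1, p.2) (Or.inl h1) htail
      rw [ptsF_cons, hstep]
      dsimp only
      obtain ⟨hH, hA, a', b', ha'le, hleb', hset, hc1, hcm1⟩ := key
      dsimp only at hH hA ha'le hleb' hset hc1 hcm1
      have hb' : b' = p.1 - 1 := hcm1 h1
      have hsetx : ∀ x : ℤ, (x, p.2) ∈ ptsF ((p.1 - 1, p.2), dir (q + qt a)) U ↔
          a' ≤ x ∧ x ≤ b' := by
        intro x
        have := Set.ext_iff.mp hset x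
        simpa using this
      refine ⟨?_, ?_, a', p.1, by omega, le_refl _, ?_, ?_, fun _ => rfl⟩
      · intro z hz
        rcases List.mem_cons.mp hz with rfl | hz
        · exact le_refl _
        · exact hH z hz
      · intro y
        by_cases hy : y = p.2
        · subst hy
          exact ⟨a', p.1, cons_same hsetx (by intro x; omega)⟩
        · obtain ⟨c, d, hcd⟩ := hA y
          exact ⟨c, d, cons_other hy hcd⟩
      · exact cons_same hsetx (by intro x; omega)
      · intro hqone; exfalso; omega
    · -- q + qt a = 0 : heading up
      have hp' : p + dir (q + qt a) = (p.1, p.2 + 1) := by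
        rw [h0]
        have : dir 0 = ((0 : ℤ), (1 : ℤ)) := by norm_num [dir]
        rw [this]
        ext <;> simp
      rw [hp'] at hstep
      have key := ih (q + qt a) (p.1, p.2 + 1) (Or.inr (Or.inl h0)) htail
      rw [ptsF_cons, hstep]
      dsimp only
      obtain ⟨hH, hA, -⟩ := key
      dsimp only at hH hA
      have hempty : ∀ x : ℤ, (x, p.2) ∈ ptsF ((p.1, p.2 + 1), dir (q + qt a)) U ↔ False := by
        intro x
        simp only [iff_false]
        intro hx
        have := hH (x, p.2) hx
        dsimp at this
        omega
      refine ⟨?_, ?_, p.1, p.1, le_refl _, le_refl _, ?_, fun _ => rfl, fun _ => rfl⟩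
      · intro z hz
        rcases List.mem_cons.mp hz with rfl | hz
        · exact le_refl _
        · have := hH z hz
          omega
      · intro y
        by_cases hy : y = p.2
        · subst hy
          exact ⟨p.1, p.1, cons_same hempty (by intro x; rw [or_false]; omega)⟩
        · obtain ⟨c, d, hcd⟩ := hA y
          exact ⟨c, d, cons_other hy hcd⟩
      · exact cons_same hempty (by intro x; rw [or_false]; omega)
    · -- q + qt a = 1 : heading right
      have hp' : p + dir (q + qt a) = (p.1 + 1, p.2) := by
        rw [hp1]
        have : dir 1 = ((1 : ℤ), (0 : ℤ)) := by norm_num [dir]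
        rw [this]
        ext <;> simp
      rw [hp'] at hstep
      have key := ih (q + qt a) (p.1 + 1, p.2) (Or.inr (Or.inr hp1)) htail
      rw [ptsF_cons, hstep]
      dsimp only
      obtain ⟨hH, hA, a', b', ha'le, hleb', hset, hc1, hcm1⟩ := key
      dsimp only at hH hA ha'le hleb' hset hc1 hcm1
      have ha' : a' = p.1 + 1 := hc1 hp1
      have hsetx : ∀ x : ℤ, (x, p.2) ∈ ptsF ((p.1 + 1, p.2), dir (q + qt a)) U ↔
          a' ≤ x ∧ x ≤ b' := by
        intro x
        have := Set.ext_iff.mp hset x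
        simpa using this
      refine ⟨?_, ?_, p.1, b', le_refl _, by omega, ?_, fun _ => rfl, ?_⟩
      · intro z hz
        rcases List.mem_cons.mp hz with rfl | hz
        · exact le_refl _
        · exact hH z hz
      · intro y
        by_cases hy : y = p.2
        · subst hy
          exact ⟨p.1, b', cons_same hsetx (by intro x; omega)⟩
        · obtain ⟨c, d, hcd⟩ := hA y
          exact ⟨c, d, cons_other hy hcd⟩
      · exact cons_same hsetx (by intro x; omega)
      · intro hqm1; exfalso; omega

theorem stmt15 (U : List TurnSym)
    (h : ∀ P, P <+: U → qturn P ∈ ({-1, 0, 1} : Set ℤ)) :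
    ∀ y : ℤ, ∃ a b : ℤ, {x : ℤ | (x, y) ∈ pts U} = Set.Icc a b := by
  have hdir0 : dir 0 = ((0 : ℤ), (1 : ℤ)) := by norm_num [dir]
  have hmain := main U 0 ((0 : ℤ), (1 : ℤ)) (Or.inr (Or.inl rfl)) (by
    intro P hP
    have := h P hP
    simp [Set.mem_insert_iff] at this
    omega)
  rw [hdir0] at hmain
  obtain ⟨hH, hA, -⟩ := hmain
  have hpts : pts U = ((0 : ℤ), (0 : ℤ)) :: ptsF (((0 : ℤ), (1 : ℤ)), ((0 : ℤ), (1 : ℤ))) U := rfl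
  intro y
  by_cases hy : y = 0
  · subst hy
    refine ⟨0, 0, ?_⟩
    rw [hpts]
    have hempty : ∀ x : ℤ, (x, (0 : ℤ)) ∈ ptsF (((0 : ℤ), (1 : ℤ)), ((0 : ℤ), (1 : ℤ))) U ↔ False := by
      intro x
      simp only [iff_false]
      intro hx
      have := hH (x, 0) hx
      dsimp at this
      omega
    have := cons_same (p := ((0 : ℤ), (0 : ℤ))) hempty
      (c := 0) (d := 0) (by intro x; simp; omega)
    simpa using this
  · obtain ⟨c, d, hcd⟩ := hA y
    refine ⟨c, d, ?_⟩
    rw [hpts]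
    exact cons_other (by simpa using hy) hcd
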